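/- Ghost-state soundness for origin tracking: extend routes with a Boolean ghost field 'fromw' that is true in init only at node w, preserved by every transfer function, and such that merge always returns one of its two arguments. If the projection of the extended network (erasing the ghost field) coincides with the original network's simulation, then whenever the extended simulation state at a node v at time t has fromw = true, the underlying (ghost-erased) route of v at time t equals the ghost-erased image of a route whose origin traces back to w, i.e., there is a sequence of nodes v = v_t, v_{t-1}, …, v_0 = w with each consecutive pair connected by an edge (or equal), along which the route was produced. -/

import Mathlib

/-- A network instance: in-neighbors, initial routes, edge transfer functions
and a merge (selection) function. -/
structure Network (V : Type) (S : Type) where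
  pred : V → List V
  init : V → S
  T : V → V → S → S
  merge : S → S → S

/-- The route computed at `v` from neighbor states `s`:
`init v` merged with the transferred routes of the in-neighbors. -/
def mergedState {V S : Type} (N : Network V S) (v : V) (s : V → S) : S :=
  (N.pred v).foldr (fun u acc => N.merge (N.T u v (s u)) acc) (N.init v)

/-- The synchronous simulation state. -/
def sim {V S : Type} (N : Network V S) : ℕ → V → S
  | 0, v => N.init v
  | t + 1, v => mergedState N v (sim N t)

/-- Initial verification condition. -/
def InitCond {V S : Type} (N : Network V S) (A : V → ℕ → Set S) : Prop :=
  ∀ v, N.init v ∈ A v 0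

/-- Inductive verification condition. -/
def IndCond {V S : Type} (N : Network V S) (A : V → ℕ → Set S) : Prop :=
  ∀ v (t : ℕ) (s : V → S), (∀ u ∈ N.pred v, s u ∈ A u t) →
    mergedState N v s ∈ A v (t + 1)

lemma foldr_sel {A B : Type} (m : A → A → A)
    (hsel : ∀ x y, m x y = x ∨ m x y = y) :
    ∀ (l : List B) (f : B → A) (a : A),
      l.foldr (fun u acc => m (f u) acc) a = a ∨
      ∃ u ∈ l, l.foldr (fun u acc => m (f u) acc) a = f u := by
  intro l f a
  induction l with
  | nil => exact Or.inl rfl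
  | cons x xs ihl =>
    simp only [List.foldr_cons]
    rcases hsel (f x) (xs.foldr (fun u acc => m (f u) acc) a) with h | h
    · exact Or.inr ⟨x, List.mem_cons_self, h⟩
    · rw [h]
      rcases ihl with h' | ⟨u, hu, h'⟩
      · exact Or.inl h'
      · exact Or.inr ⟨u, List.mem_cons_of_mem _ hu, h'⟩

/-- Ghost-state soundness for origin tracking: if the ghost 'fromw' flag of
the extended simulation is set at node v at time t, there is a propagation
path from w to v of length t in the graph (allowing self-stays). -/
theorem ghost_provenance {V S : Type} [DecidableEq V]
    (N : Network V S) (w : V) (N' : Network V (S × Bool))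
    (hpred : N'.pred = N.pred)
    (hinit : ∀ v, N'.init v = (N.init v, decide (v = w)))
    (hT : ∀ u v (s : S) (b : Bool), N'.T u v (s, b) = (N.T u v s, b))
    (hsel : ∀ x y : S × Bool, N'.merge x y = x ∨ N'.merge x y = y)
    (hproj : ∀ x y : S × Bool, (N'.merge x y).1 = N.merge x.1 y.1)
    (hsim : ∀ (t : ℕ) (v : V), (sim N' t v).1 = sim N t v)
    (v : V) (t : ℕ) (h : (sim N' t v).2 = true) :
    ∃ p : ℕ → V, p 0 = w ∧ p t = v ∧
      ∀ i < t, p (i + 1) = p i ∨ p i ∈ N.pred (p (i + 1)) := by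
  induction t generalizing v with
  | zero =>
    have : (v = w) := by
      have := hinit v
      simp [sim, this] at h
      exact h
    exact ⟨fun _ => w, rfl, this.symm ▸ rfl, by omega⟩
  | succ t ih =>
    have key := foldr_sel N'.merge hsel (N'.pred v)
      (fun u => N'.T u v (sim N' t u)) (N'.init v)
    rcases key with heq | ⟨u, hu, heq⟩
    · have hvw : v = w := by
        simp only [sim, mergedState] at h
        rw [heq, hinit v] at h
        simpa using h
      refine ⟨fun _ => w, rfl, hvw ▸ rfl, fun i _ => Or.inl rfl⟩
    · have hTu := hT u v (sim N' t u).1 (sim N' t u).2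
      have hg : (sim N' t u).2 = true := by
        simp only [sim, mergedState, heq] at h
        rw [show ((sim N' t u).1, (sim N' t u).2) = sim N' t u from rfl] at hTu
        rw [hTu] at h
        exact h
      obtain ⟨q, hq0, hqt, hqs⟩ := ih u hg
      refine ⟨fun i => if i ≤ t then q i else v, by simp [hq0], by simp, ?_⟩
      intro i hi
      dsimp only
      by_cases hit : i = t
      · rw [if_neg (by omega), if_pos (by omega : i ≤ t), hit, hqt]
        right
        rw [← hpred]
        exact hu
      · have hi' : i < t := by omega
        rw [if_pos (by omega : i + 1 ≤ t), if_pos (by omega : i ≤ t)]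
        exact hqs i hi'
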